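/- arXiv:2108.00059 — 2 statements merged into one kernel-verified Lean document; each statement's English description precedes it below -/
import Mathlib

section
/- Every connected paw-minimal graph consists of an induced cycle plus exactly one additional vertex (which, by connectivity, has at least one neighbor on the cycle). -/
open SimpleGraph

variable {α β : Type*}

/-- A model of `H` in `G`: a family of pairwise disjoint nonempty vertex subsets of `G`,
each inducing a connected subgraph, such that for every edge `h h'` of `H` there is an
edge of `G` between `V h` and `V h'`. -/
def IsMinorModel (G : SimpleGraph α) (H : SimpleGraph β) (V : β → Set α) : Prop :=
  (∀ h, (V h).Nonempty) ∧
  (Pairwise fun h h' => Disjoint (V h) (V h')) ∧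
  (∀ h, (G.induce (V h)).Connected) ∧
  ∀ h h', H.Adj h h' → ∃ x ∈ V h, ∃ y ∈ V h', G.Adj x y

/-- `H` is a minor of `G`. -/
def HasMinor (G : SimpleGraph α) (H : SimpleGraph β) : Prop :=
  ∃ V : β → Set α, IsMinorModel G H V

/-- `G` is `H`-minimal: `H` is a minor of `G`, but for every vertex `x` of `G`,
`H` is not a minor of `G − x`. -/
def MinorMinimal (G : SimpleGraph α) (H : SimpleGraph β) : Prop :=
  HasMinor G H ∧ ∀ x : α, ¬ HasMinor (G.induce {y | y ≠ x}) H

/-- A graph is 2-connected if it has at least 3 vertices, is connected, and stays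
connected after deleting any single vertex. -/
def TwoConnected [Fintype α] (G : SimpleGraph α) : Prop :=
  3 ≤ Fintype.card α ∧ G.Connected ∧ ∀ v : α, (G.induce {w | w ≠ v}).Connected

/-- `G` is a cycle: connected and 2-regular. -/
def IsCycleGraph (G : SimpleGraph α) : Prop :=
  G.Connected ∧ ∀ v : α, (G.neighborSet v).ncard = 2

/-- The paw: a triangle `0,1,2` together with one additional vertex `3` adjacent to
exactly one vertex of the triangle. -/
def pawGraph : SimpleGraph (Fin 4) :=
  fromEdgeSet {s(0, 1), s(0, 2), s(1, 2), s(2, 3)}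

section Helpers

variable {G : SimpleGraph α}

/-- Inclusion homomorphism from an induced subgraph into the graph. -/
def inclHom (G : SimpleGraph α) (B : Set α) : G.induce B →g G :=
  ⟨Subtype.val, fun h => h⟩

lemma inclHom_injective {B : Set α} : Function.Injective (inclHom G B) :=
  Subtype.val_injective

/-- Walks whose support lies in `B` lift to the induced subgraph on `B`. -/
lemma exists_lift_walk {B : Set α} : ∀ {u v : α} (p : G.Walk u v)
    (hp : ∀ x ∈ p.support, x ∈ B),
    ∃ q : (G.induce B).Walk ⟨u, hp u p.start_mem_support⟩ ⟨v, hp v p.end_mem_support⟩,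
      q.map (inclHom G B) = p := by
  intro u v p
  induction p with
  | nil => exact fun hp => ⟨Walk.nil, rfl⟩
  | @cons u u' v h p ih =>
    intro hp
    obtain ⟨q, hq⟩ := ih (fun x hx => hp x (List.mem_cons_of_mem _ hx))
    refine ⟨Walk.cons (show (G.induce B).Adj ⟨u, hp u (Walk.start_mem_support _)⟩ ⟨u', hp u' (by simp)⟩ from h) q, ?_⟩
    simp [Walk.map_cons, hq]
    rfl

lemma lift_support {B : Set α} {a b : B} {p : G.Walk ↑a ↑b}
    (q : (G.induce B).Walk a b) (hq : q.map (inclHom G B) = p) :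
    p.support = q.support.map Subtype.val := by
  subst hq; exact Walk.support_map _ _

lemma lift_edges {B : Set α} {a b : B} {p : G.Walk ↑a ↑b}
    (q : (G.induce B).Walk a b) (hq : q.map (inclHom G B) = p) :
    p.edges = q.edges.map (Sym2.map Subtype.val) := by
  subst hq; exact Walk.edges_map _ _

lemma lift_isCycle {B : Set α} {a : B} {p : G.Walk ↑a ↑a}
    (q : (G.induce B).Walk a a) (hq : q.map (inclHom G B) = p)
    (hp : p.IsCycle) : q.IsCycle := by
  rw [← hq] at hp
  exact (Walk.map_isCycle_iff_of_injective inclHom_injective).mp hp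

lemma lift_mem_support {B : Set α} {a b : B} {p : G.Walk ↑a ↑b}
    (q : (G.induce B).Walk a b) (hq : q.map (inclHom G B) = p)
    {x : B} : x ∈ q.support ↔ (x : α) ∈ p.support := by
  rw [lift_support q hq]
  constructor
  · exact fun h => List.mem_map_of_mem h
  · intro h
    obtain ⟨y, hy, hyx⟩ := List.mem_map.mp h
    rwa [← Subtype.ext hyx]

/-- Any two vertices in the support of a walk are reachable from each other. -/
lemma reachable_of_mem_support {u v x y : α} (p : G.Walk u v)
    (hx : x ∈ p.support) (hy : y ∈ p.support) : G.Reachable x y := by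
  classical
  exact ⟨(p.takeUntil x hx).reverse.append (p.takeUntil y hy)⟩

lemma reachable_induce_mono {A B : Set α} (hAB : A ⊆ B) {a b : A}
    (h : (G.induce A).Reachable a b) :
    (G.induce B).Reachable ⟨a, hAB a.2⟩ ⟨b, hAB b.2⟩ := by
  obtain ⟨p⟩ := h
  exact ⟨p.map (G.induceHomOfLE hAB).toHom⟩

lemma reachable_induce_support {u v : α} (p : G.Walk u v) :
    ∀ x (hx : x ∈ p.support),
      (G.induce {y | y ∈ p.support}).Reachable ⟨u, p.start_mem_support⟩ ⟨x, hx⟩ := by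
  induction p with
  | nil =>
    intro x hx
    simp only [Walk.support_nil, List.mem_singleton] at hx
    subst hx
    rfl
  | @cons u u' v h q ih =>
    intro x hx
    rcases List.mem_cons.mp hx with h1 | h1
    · subst h1; rfl
    · have step : (G.induce {y | y ∈ (Walk.cons h q).support}).Adj
          ⟨u, (Walk.cons h q).start_mem_support⟩ ⟨u', by simp⟩ := h
      refine step.reachable.trans ?_
      have := reachable_induce_mono (G := G)
        (A := {y | y ∈ q.support}) (B := {y | y ∈ (Walk.cons h q).support})
        (fun z hz => by simp only [Set.mem_setOf_eq, Walk.support_cons]; exact List.mem_cons_of_mem _ hz)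
        (ih x h1)
      exact this

lemma connected_induce_support {u v : α} (p : G.Walk u v) :
    (G.induce {y | y ∈ p.support}).Connected := by
  haveI : Nonempty {y | y ∈ p.support} := ⟨⟨u, p.start_mem_support⟩⟩
  refine ⟨fun a b => ?_⟩
  exact (reachable_induce_support p a a.2).symm.trans (reachable_induce_support p b b.2)

lemma connected_induce_singleton (v : α) : (G.induce ({v} : Set α)).Connected := by
  haveI : Nonempty ({v} : Set α) := ⟨⟨v, rfl⟩⟩
  refine ⟨fun a b => ?_⟩
  have : a = b := Subtype.ext (a.2.trans b.2.symm)
  rw [this]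

/-- For a nontrivial closed walk, membership in the support equals membership in its tail. -/
lemma mem_support_iff_mem_tail {v x : α} (c : G.Walk v v) (hc : c ≠ Walk.nil) :
    x ∈ c.support ↔ x ∈ c.support.tail := by
  cases c with
  | nil => exact absurd rfl hc
  | cons h q =>
    simp only [Walk.support_cons, List.tail_cons, List.mem_cons]
    constructor
    · rintro (rfl | h1)
      · exact q.end_mem_support
      · exact h1
    · exact fun h1 => Or.inr h1

lemma mem_support_rotate_iff [DecidableEq α] {v u x : α} {c : G.Walk v v} (hc : c.IsCycle)
    (h : u ∈ c.support) : x ∈ (c.rotate u h).support ↔ x ∈ c.support := by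
  rw [mem_support_iff_mem_tail _ (hc.rotate h).ne_nil, mem_support_iff_mem_tail _ hc.ne_nil]
  exact (Walk.support_rotate c u h).mem_iff

lemma IsPath.start_ne_end {x y : α} {p : G.Walk x y} (hp : p.IsPath) (hl : 0 < p.length) :
    x ≠ y := by
  cases p with
  | nil => simp at hl
  | cons h q =>
    rw [Walk.cons_isPath_iff] at hp
    intro hxy
    exact hp.2 (hxy ▸ q.end_mem_support)

/-- A walk from outside a set into the set crosses the boundary. -/
lemma exists_boundary_adj {S : Set α} : ∀ {a b : α} (p : G.Walk a b), a ∉ S → b ∈ S →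
    ∃ x y, x ∉ S ∧ y ∈ S ∧ G.Adj x y := by
  intro a b p
  induction p with
  | nil => exact fun ha hb => absurd hb ha
  | @cons a a' b h q ih =>
    intro ha hb
    by_cases ha' : a' ∈ S
    · exact ⟨a, a', ha, ha', h⟩
    · exact ih ha' hb

end Helpers

section PawHelpers

variable {G : SimpleGraph α}

theorem hasMinor_paw_of_adj_start {y w : α} (K : G.Walk y y) (hK : K.IsCycle)
    (hw : w ∉ K.support) (hadj : G.Adj w y) : HasMinor G pawGraph := by
  have hlen := hK.three_le_length
  cases K with
  | nil => exact absurd hK Walk.IsCycle.not_of_nil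
  | @cons _ v _ h1 q =>
    -- h1 : G.Adj y v, q : G.Walk v y
    rw [Walk.cons_isCycle_iff] at hK
    obtain ⟨hqpath, hyv⟩ := hK
    have hvy : v ≠ y := (h1.ne).symm
    obtain ⟨v', h2, q', rfl⟩ := q.exists_eq_cons_of_ne hvy
    -- h2 : G.Adj v v', q' : G.Walk v' y
    rw [Walk.cons_isPath_iff] at hqpath
    obtain ⟨hq'path, hvq'⟩ := hqpath
    have hq'len : 0 < q'.length := by
      simp only [Walk.length_cons] at hlen; omega
    have hv'y : v' ≠ y := IsPath.start_ne_end hq'path hq'len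
    have hrevpath : q'.reverse.IsPath := hq'path.reverse
    obtain ⟨y₂, h3, r, hrev⟩ := q'.reverse.exists_eq_cons_of_ne (Ne.symm hv'y)
    -- h3 : G.Adj y y₂, r : G.Walk y₂ v', q'.reverse = cons h3 r
    have hyr : y ∉ r.support := by
      rw [hrev, Walk.cons_isPath_iff] at hrevpath
      exact hrevpath.2
    have hrq' : ∀ x ∈ r.support, x ∈ q'.support := by
      intro x hx
      have : x ∈ q'.reverse.support := by
        rw [hrev, Walk.support_cons]
        exact List.mem_cons_of_mem _ hx
      rwa [Walk.support_reverse, List.mem_reverse] at this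
    have hvr : v ∉ r.support := fun hx => hvq' (hrq' _ hx)
    have hwsup : w ≠ y ∧ w ≠ v ∧ w ∉ q'.support := by
      simp only [Walk.support_cons, List.mem_cons] at hw
      push_neg at hw
      exact hw
    have hwr : w ∉ r.support := fun hx => hwsup.2.2 (hrq' _ hx)
    have hy2r : y₂ ∈ r.support := r.start_mem_support
    have hv'r : v' ∈ r.support := r.end_mem_support
    refine ⟨![{v}, {x | x ∈ r.support}, {y}, {w}], ?_, ?_, ?_, ?_⟩
    · intro i
      fin_cases i
      · exact ⟨v, rfl⟩
      · exact ⟨y₂, hy2r⟩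
      · exact ⟨y, rfl⟩
      · exact ⟨w, rfl⟩
    · intro i j hij
      fin_cases i <;> fin_cases j <;> simp_all <;>
        first
        | exact fun hx => hvr hx
        | exact hyr
        | exact hwr
        | exact Ne.symm hvy
        | exact Ne.symm hwsup.2.1
        | exact Ne.symm hwsup.1
        | exact hwsup.1
        | skip
    · intro i
      fin_cases i
      · exact connected_induce_singleton v
      · exact connected_induce_support r
      · exact connected_induce_singleton y
      · exact connected_induce_singleton w
    · intro i j hij
      fin_cases i <;> fin_cases j <;>
        first
        | (exfalso; revert hij; simp [pawGraph, fromEdgeSet_adj]; done)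
        | exact ⟨v, rfl, v', hv'r, h2⟩
        | exact ⟨v', hv'r, v, rfl, h2.symm⟩
        | exact ⟨v, rfl, y, rfl, h1.symm⟩
        | exact ⟨y, rfl, v, rfl, h1⟩
        | exact ⟨y₂, hy2r, y, rfl, h3.symm⟩
        | exact ⟨y, rfl, y₂, hy2r, h3⟩
        | exact ⟨y, rfl, w, rfl, hadj.symm⟩
        | exact ⟨w, rfl, y, rfl, hadj⟩

theorem hasMinor_paw_of_cycle_adj {u w y : α} (K : G.Walk u u) (hK : K.IsCycle)
    (hw : w ∉ K.support) (hy : y ∈ K.support) (hadj : G.Adj w y) : HasMinor G pawGraph := by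
  classical
  exact hasMinor_paw_of_adj_start (K.rotate y hy) (hK.rotate hy)
    (fun hc => hw ((mem_support_rotate_iff hK hy).mp hc)) hadj

theorem hasMinor_paw_of_cycle_reachable {u z : α} (K : G.Walk u u) (hK : K.IsCycle)
    (hz : z ∉ K.support) (hr : G.Reachable z u) : HasMinor G pawGraph := by
  obtain ⟨p⟩ := hr
  obtain ⟨x, y, hx, hy, hadj⟩ :=
    exists_boundary_adj (S := {x | x ∈ K.support}) p hz K.start_mem_support
  exact hasMinor_paw_of_cycle_adj K hK hx hy hadj

/-- A chord of a cycle yields a cycle avoiding some vertex of the original cycle. -/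
theorem chord_cycle [DecidableEq α] {a b : α} (C : G.Walk a a) (hC : C.IsCycle)
    (hab : G.Adj a b) (hbC : b ∈ C.support) (hch : s(a, b) ∉ C.edges) :
    ∃ C1 : G.Walk a a, C1.IsCycle ∧ (∀ x ∈ C1.support, x ∈ C.support) ∧
      ∃ z ∈ C.support, z ∉ C1.support := by
  cases C with
  | nil => exact absurd hC Walk.IsCycle.not_of_nil
  | @cons _ c _ h1 q =>
    -- h1 : G.Adj a c, q : G.Walk c a
    rw [Walk.cons_isCycle_iff] at hC
    obtain ⟨hqpath, hac⟩ := hC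
    have hba : b ≠ a := hab.ne'
    have hbq : b ∈ q.support := by
      rcases List.mem_cons.mp (by simpa using hbC) with h' | h'
      · exact absurd h' hba
      · exact h'
    set q1 := q.takeUntil b hbq with hq1
    set q2 := q.dropUntil b hbq with hq2
    have hspec : q1.append q2 = q := q.take_spec hbq
    have hq1path : q1.IsPath := hqpath.takeUntil hbq
    have hq2path : q2.IsPath := hqpath.dropUntil hbq
    have hsupp : q.support = q1.support ++ q2.support.tail := by
      rw [← hspec, Walk.support_append]
    have hnodup : (q1.support ++ q2.support.tail).Nodup := by
      rw [← hsupp]; exact hqpath.support_nodup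
    have haq2 : a ∈ q2.support.tail := q2.end_mem_tail_support_of_ne hba
    have haq1 : a ∉ q1.support := fun hx =>
      (List.disjoint_of_nodup_append hnodup) hx haq2
    -- the new cycle
    refine ⟨Walk.cons h1 (q1.concat hab.symm), ?_, ?_, ?_⟩
    · rw [Walk.cons_isCycle_iff]
      constructor
      · rw [← Walk.isPath_reverse_iff, Walk.reverse_concat]
        rw [Walk.cons_isPath_iff]
        exact ⟨hq1path.reverse, by rwa [Walk.support_reverse, List.mem_reverse]⟩
      · rw [Walk.edges_concat, List.concat_eq_append, List.mem_append]
        rintro (h' | h')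
        · exact haq1 (q1.fst_mem_support_of_mem_edges h')
        · simp only [List.mem_singleton, List.mem_cons, List.not_mem_nil, or_false,
            Sym2.eq_iff] at h'
          apply hch
          have hcb : c = b := by
            rcases h' with ⟨h1', h2'⟩ | ⟨h1', h2'⟩ <;>
              first
              | exact absurd h1' hab.ne
              | exact absurd h1' hab.ne'
              | exact absurd h1'.symm hab.ne
              | exact h2'
              | exact h2'.symm
          rw [Walk.edges_cons, ← hcb]
          exact List.mem_cons_self
    · intro x hx
      simp only [Walk.support_cons, Walk.support_concat, List.concat_eq_append,
        List.mem_cons, List.mem_append, List.mem_singleton] at hx ⊢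
      rcases hx with rfl | hx | rfl | h0
      · exact Or.inl rfl
      · exact Or.inr (q.support_takeUntil_subset hbq hx)
      · exact Or.inl rfl
      · cases h0
    · -- missing vertex: the second vertex of q2
      obtain ⟨z, h4, q3, hq2c⟩ := q2.exists_eq_cons_of_ne hba
      -- h4 : G.Adj b z, q3 : G.Walk z a
      have hza : z ≠ a := by
        rintro rfl
        apply hch
        have : s(b, z) ∈ q2.edges := by rw [hq2c, Walk.edges_cons]; exact List.mem_cons_self
        have h5 := q.edges_dropUntil_subset hbq this
        rw [Walk.edges_cons]
        right
        rwa [Sym2.eq_swap] at h5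
      have hzq2t : z ∈ q2.support.tail := by
        rw [hq2c, Walk.support_cons, List.tail_cons]
        exact q3.start_mem_support
      have hzq1 : z ∉ q1.support := fun hx =>
        (List.disjoint_of_nodup_append hnodup) hx hzq2t
      refine ⟨z, ?_, ?_⟩
      · rw [Walk.support_cons, List.mem_cons]
        right
        exact q.support_dropUntil_subset hbq (List.mem_of_mem_tail hzq2t)
      · intro hx
        simp only [Walk.support_cons, Walk.support_concat, List.concat_eq_append,
          List.mem_cons, List.mem_append, List.mem_singleton] at hx
        rcases hx with rfl | hx | rfl | h0
        · exact hza rfl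
        · exact hzq1 hx
        · exact hza rfl
        · cases h0

lemma mapped_support_subset {B : Set α} {a b : B} (p : (G.induce B).Walk a b) :
    ∀ x ∈ (p.map (inclHom G B)).support, x ∈ B := by
  intro x hx
  rw [Walk.support_map] at hx
  obtain ⟨y, _, rfl⟩ := List.mem_map.mp hx
  exact y.2

theorem exists_cycle_of_hasMinor_paw (h : HasMinor G pawGraph) :
    ∃ (w u : α) (K : G.Walk u u), K.IsCycle ∧ w ∉ K.support := by
  classical
  obtain ⟨V, hne, hdisj, hconn, hedge⟩ := h
  obtain ⟨a0, ha0, a1, ha1, hA⟩ := hedge 0 1 (by simp [pawGraph, fromEdgeSet_adj])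
  obtain ⟨b1, hb1, b2, hb2, hB⟩ := hedge 1 2 (by simp [pawGraph, fromEdgeSet_adj])
  obtain ⟨c0, hc0, c2, hc2, hC⟩ := hedge 0 2 (by simp [pawGraph, fromEdgeSet_adj])
  have hd01 : Disjoint (V 0) (V 1) := hdisj (by decide)
  have hd02 : Disjoint (V 0) (V 2) := hdisj (by decide)
  have hd12 : Disjoint (V 1) (V 2) := hdisj (by decide)
  have hd30 : Disjoint (V 3) (V 0) := hdisj (by decide)
  have hd31 : Disjoint (V 3) (V 1) := hdisj (by decide)
  have hd32 : Disjoint (V 3) (V 2) := hdisj (by decide)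
  set S : Set α := V 0 ∪ V 1 ∪ V 2 with hS
  -- walks inside the parts
  obtain ⟨p0⟩ := (hconn 0).preconnected ⟨c0, hc0⟩ ⟨a0, ha0⟩
  obtain ⟨p1⟩ := (hconn 1).preconnected ⟨a1, ha1⟩ ⟨b1, hb1⟩
  obtain ⟨p2⟩ := (hconn 2).preconnected ⟨b2, hb2⟩ ⟨c2, hc2⟩
  set P0 : G.Walk c0 a0 := p0.map (inclHom G (V 0)) with hP0
  set P1 : G.Walk a1 b1 := p1.map (inclHom G (V 1)) with hP1
  set P2 : G.Walk b2 c2 := p2.map (inclHom G (V 2)) with hP2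
  have hP0s := mapped_support_subset p0
  have hP1s := mapped_support_subset p1
  have hP2s := mapped_support_subset p2
  set W : G.Walk c0 c2 := P0.append (Walk.cons hA (P1.append (Walk.cons hB P2))) with hW
  have hWsup : ∀ x ∈ W.support, x ∈ S := by
    intro x hx
    rw [hW] at hx
    rw [Walk.mem_support_append_iff] at hx
    rcases hx with hx | hx
    · exact Or.inl (Or.inl (hP0s x hx))
    · rw [Walk.support_cons] at hx
      rcases List.mem_cons.mp hx with rfl | hx
      · exact Or.inl (Or.inl (hP0s x P0.end_mem_support))
      · rw [Walk.mem_support_append_iff] at hx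
        rcases hx with hx | hx
        · exact Or.inl (Or.inr (hP1s x hx))
        · rw [Walk.support_cons] at hx
          rcases List.mem_cons.mp hx with rfl | hx
          · exact Or.inl (Or.inr (hP1s x P1.end_mem_support))
          · exact Or.inr (hP2s x hx)
  have hWedge : s(c0, c2) ∉ W.edges := by
    intro hx
    rw [hW, Walk.edges_append, List.mem_append] at hx
    rcases hx with hx | hx
    · exact (hd02.ne_of_mem (hP0s c2 (P0.snd_mem_support_of_mem_edges hx)) hc2) rfl
    · rw [Walk.edges_cons] at hx
      rcases List.mem_cons.mp hx with he | hx
      · rw [Sym2.eq_iff] at he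
        rcases he with ⟨h1', h2'⟩ | ⟨h1', h2'⟩
        · exact (hd12.ne_of_mem (h2' ▸ ha1) hc2) rfl
        · exact (hd01.ne_of_mem hc0 (h1' ▸ ha1)) rfl
      · rw [Walk.edges_append, List.mem_append] at hx
        rcases hx with hx | hx
        · exact (hd12.ne_of_mem (hP1s c2 (P1.snd_mem_support_of_mem_edges hx)) hc2) rfl
        · rw [Walk.edges_cons] at hx
          rcases List.mem_cons.mp hx with he | hx
          · rw [Sym2.eq_iff] at he
            rcases he with ⟨h1', h2'⟩ | ⟨h1', h2'⟩
            · exact (hd01.ne_of_mem hc0 (h1' ▸ hb1)) rfl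
            · exact (hd02.ne_of_mem hc0 (h1' ▸ hb2)) rfl
          · exact (hd02.ne_of_mem hc0 (hP2s c0 (P2.fst_mem_support_of_mem_edges hx))) rfl
  obtain ⟨W', hW'⟩ := exists_lift_walk W hWsup
  have hadj' : (G.induce S).Adj ⟨c0, hWsup c0 W.start_mem_support⟩ ⟨c2, hWsup c2 W.end_mem_support⟩ := hC
  have hW'edge : ∀ e ∈ W'.edges, e ∉ ({s(⟨c0, hWsup c0 W.start_mem_support⟩,
      ⟨c2, hWsup c2 W.end_mem_support⟩)} : Set (Sym2 S)) := by
    intro e he hee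
    apply hWedge
    rw [Set.mem_singleton_iff] at hee
    subst hee
    have := List.mem_map_of_mem (f := Sym2.map Subtype.val) he
    rw [← lift_edges W' hW'] at this
    simpa using this
  have hreach : ((G.induce S) \ fromEdgeSet {s(⟨c0, hWsup c0 W.start_mem_support⟩,
      ⟨c2, hWsup c2 W.end_mem_support⟩)}).Reachable ⟨c0, hWsup c0 W.start_mem_support⟩
      ⟨c2, hWsup c2 W.end_mem_support⟩ := ⟨W'.toDeleteEdges _ hW'edge⟩
  obtain ⟨u', p', hp'cyc, -⟩ := (adj_and_reachable_delete_edges_iff_exists_cycle).mp ⟨hadj', hreach⟩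
  obtain ⟨w, hw3⟩ := hne 3
  refine ⟨w, u', p'.map (inclHom G S), (Walk.map_isCycle_iff_of_injective inclHom_injective).mpr hp'cyc, ?_⟩
  intro hw
  have := mapped_support_subset p' w hw
  rcases this with h' | h'
  · rcases h' with h' | h'
    · exact (hd30.ne_of_mem hw3 h') rfl
    · exact (hd31.ne_of_mem hw3 h') rfl
  · exact (hd32.ne_of_mem hw3 h') rfl

lemma outside_unique (hmin2 : ∀ x : α, ¬ HasMinor (G.induce {y | y ≠ x}) pawGraph)
    {u : α} (K : G.Walk u u) (hK : K.IsCycle) :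
    ∀ n : ℕ, ∀ w1 w2 : α, ∀ p1 : G.Walk w1 u, p1.length ≤ n →
      w1 ∉ K.support → w2 ∉ K.support → w1 ≠ w2 → False := by
  classical
  intro n
  induction n with
  | zero =>
    intro w1 w2 p1 hl hw1 _ _
    exact hw1 ((Walk.eq_of_length_eq_zero (Nat.le_zero.mp hl)) ▸ K.start_mem_support)
  | succ n ih =>
    intro w1 w2 p1 hl hw1 hw2 hne
    by_cases hmem : w2 ∈ p1.support
    · set p2 := p1.dropUntil w2 hmem with hp2
      have hlen : (p1.takeUntil w2 hmem).length + p2.length = p1.length := by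
        rw [← Walk.length_append, Walk.take_spec]
      have htpos : 0 < (p1.takeUntil w2 hmem).length := by
        rcases Nat.eq_zero_or_pos (p1.takeUntil w2 hmem).length with h0 | h
        · exact absurd (Walk.eq_of_length_eq_zero h0) hne
        · exact h
      exact ih w2 w1 p2 (by omega) hw2 hw1 hne.symm
    · apply hmin2 w2
      have hKsup : ∀ x ∈ K.support, x ∈ {y | y ≠ w2} := fun x hx hxw => hw2 (hxw ▸ hx)
      obtain ⟨K', hK'⟩ := exists_lift_walk K hKsup
      have hK'cyc := lift_isCycle K' hK' hK
      have hp1sup : ∀ x ∈ p1.support, x ∈ {y | y ≠ w2} := fun x hx hxw => hmem (hxw ▸ hx)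
      obtain ⟨p1', hp1'⟩ := exists_lift_walk p1 hp1sup
      have hw1' : (⟨w1, hp1sup w1 p1.start_mem_support⟩ : {y | y ≠ w2}) ∉ K'.support :=
        fun hc => hw1 ((lift_mem_support K' hK').mp hc)
      exact hasMinor_paw_of_cycle_reachable K' hK'cyc hw1' ⟨p1'⟩

end PawHelpers

/-- Every connected paw-minimal graph consists of an induced cycle plus exactly one
additional vertex, which has at least one neighbor on the cycle. -/
theorem paw_minimal (G : SimpleGraph α) [Fintype α] (hconn : G.Connected)
    (hmin : MinorMinimal G pawGraph) :
    ∃ w : α, IsCycleGraph (G.induce {u | u ≠ w}) ∧ ∃ y : α, G.Adj w y := by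
  obtain ⟨hmin1, hmin2⟩ := hmin
  classical
  obtain ⟨w, u, K, hK, hw⟩ := exists_cycle_of_hasMinor_paw hmin1
  have hall : ∀ x : α, x ∉ K.support → x = w := by
    intro x hx
    by_contra hne
    obtain ⟨p1⟩ := hconn.preconnected x u
    exact outside_unique hmin2 K hK p1.length x w p1 le_rfl hx hw hne
  have hwu : w ≠ u := fun h => hw (h ▸ K.start_mem_support)
  refine ⟨w, ?_, ?_⟩
  swap
  · obtain ⟨p⟩ := hconn.preconnected w u
    cases p with
    | nil => exact absurd rfl hwu
    | cons h q => exact ⟨_, h⟩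
  set T : Set α := {y | y ≠ w} with hT
  have hKT : ∀ x ∈ K.support, x ∈ T := fun x hx hxw => hw (hxw ▸ hx)
  obtain ⟨K', hK'⟩ := exists_lift_walk K hKT
  have hK'cyc := lift_isCycle K' hK' hK
  have hspan : ∀ z : T, z ∈ K'.support := by
    intro z
    rw [lift_mem_support K' hK']
    by_contra hc
    exact z.2 (hall z hc)
  have hpre : (G.induce T).Preconnected := fun x y =>
    reachable_of_mem_support K' (hspan x) (hspan y)
  haveI : Nonempty T := ⟨⟨u, hKT u K.start_mem_support⟩⟩
  refine ⟨⟨hpre⟩, ?_⟩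
  intro v
  have hvK' : v ∈ K'.support := hspan v
  have hCcyc : (K'.rotate v hvK').IsCycle := hK'cyc.rotate hvK'
  have hCspan : ∀ z : T, z ∈ (K'.rotate v hvK').support := fun z =>
    (mem_support_rotate_iff hK'cyc hvK').mpr (hspan z)
  have hnochord : ∀ b : T, (G.induce T).Adj v b → s(v, b) ∈ (K'.rotate v hvK').edges := by
    intro b hadj
    by_contra hch
    apply hmin2 w
    obtain ⟨C1, hC1cyc, hC1sub, z, hzC, hzC1⟩ :=
      chord_cycle (K'.rotate v hvK') hCcyc hadj (hCspan b) hch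
    exact hasMinor_paw_of_cycle_reachable C1 hC1cyc hzC1 (hpre z v)
  -- decompose the rotated cycle
  revert hnochord hCspan hCcyc
  generalize K'.rotate v hvK' = C
  intro hCcyc hCspan hnochord
  cases C with
  | nil => exact absurd hCcyc Walk.IsCycle.not_of_nil
  | @cons _ c _ h1 q =>
    have hlen := hCcyc.three_le_length
    rw [Walk.cons_isCycle_iff] at hCcyc
    obtain ⟨hqpath, -⟩ := hCcyc
    have hrevpath : q.reverse.IsPath := hqpath.reverse
    obtain ⟨d, h2, r, hrev⟩ := q.reverse.exists_eq_cons_of_ne h1.ne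
    have hvr : v ∉ r.support := by
      rw [hrev, Walk.cons_isPath_iff] at hrevpath
      exact hrevpath.2
    have hrpath : r.IsPath := by
      rw [hrev, Walk.cons_isPath_iff] at hrevpath
      exact hrevpath.1
    have hrlen : 0 < r.length := by
      have : q.reverse.length = q.length := Walk.length_reverse q
      rw [hrev] at this
      simp only [Walk.length_cons] at this hlen
      omega
    have hcd : c ≠ d := fun h => (IsPath.start_ne_end hrpath hrlen) (by rw [h])
    have hnb : (G.induce T).neighborSet v = {c, d} := by
      ext b
      simp only [mem_neighborSet, Set.mem_insert_iff, Set.mem_singleton_iff]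
      constructor
      · intro hadj
        have hedge := hnochord b hadj
        rw [Walk.edges_cons] at hedge
        rcases List.mem_cons.mp hedge with he | he
        · left
          rw [Sym2.eq_iff] at he
          rcases he with ⟨-, h2'⟩ | ⟨h1', -⟩
          · exact h2'
          · exact absurd h1' h1.ne
        · right
          have : s(v, b) ∈ q.reverse.edges := by
            rw [Walk.edges_reverse, List.mem_reverse]
            exact he
          rw [hrev, Walk.edges_cons] at this
          rcases List.mem_cons.mp this with he' | he'
          · rw [Sym2.eq_iff] at he'
            rcases he' with ⟨-, h2'⟩ | ⟨h1', -⟩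
            · exact h2'
            · exact absurd h1' h2.ne
          · exact absurd (r.fst_mem_support_of_mem_edges he') hvr
      · rintro (rfl | rfl)
        · exact h1
        · exact h2
    rw [hnb]
    exact Set.ncard_pair hcd
end

section
/- Let H' be a graph and let H be the disjoint union of H' and a single isolated vertex. A connected graph G is H-minor-free if and only if G is H'-minor-free or G is H'-minimal. -/
open SimpleGraph

variable {α β : Type*}

/-- The disjoint union of `H'` and a single isolated vertex. -/
def addIsolatedVertex (H' : SimpleGraph β) : SimpleGraph (β ⊕ Unit) where
  Adj x y :=
    match x, y with
    | Sum.inl a, Sum.inl b => H'.Adj a b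
    | _, _ => False
  symm := by
    constructor
    rintro (a | a) (b | b) h <;> simp_all
    exact h.symm
  loopless := by
    constructor
    rintro (a | a) h <;> simp_all

noncomputable def induceInduceIso (G : SimpleGraph α) (s : Set α) (t : Set s) :
    ((G.induce s).induce t) ≃g G.induce (Subtype.val '' t) where
  toEquiv := Equiv.Set.image Subtype.val t Subtype.val_injective
  map_rel_iff' := by
    rintro ⟨⟨a, ha⟩, hat⟩ ⟨⟨b, hb⟩, hbt⟩
    simp [Equiv.Set.image, Equiv.Set.imageOfInjOn]

lemma singleton_induce_connected (G : SimpleGraph α) (x : α) :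
    (G.induce {x}).Connected := by
  have : Nonempty ({x} : Set α) := ⟨⟨x, rfl⟩⟩
  refine ⟨fun a b => ?_⟩
  have h : a = b := Subsingleton.elim a b
  exact h ▸ Reachable.refl a

/-- Let `H` be `H'` plus an isolated vertex.  A connected graph `G` is `H`-minor-free
if and only if `G` is `H'`-minor-free or `G` is `H'`-minimal. -/
theorem addIsolated_minor_free_iff (G : SimpleGraph α) (H' : SimpleGraph β)
    (hconn : G.Connected) :
    ¬ HasMinor G (addIsolatedVertex H') ↔ (¬ HasMinor G H' ∨ MinorMinimal G H') := by
  constructor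
  · intro hH
    by_cases h' : HasMinor G H'
    · refine Or.inr ⟨h', fun x hx => ?_⟩
      obtain ⟨V, hne, hdisj, hconn', hadj⟩ := hx
      apply hH
      refine ⟨Sum.elim (fun b => Subtype.val '' V b) (fun _ => {x}), ?_, ?_, ?_, ?_⟩
      · rintro (b | u)
        · exact (hne b).image _
        · exact Set.singleton_nonempty x
      · have hx_not : ∀ b, x ∉ Subtype.val '' V b := by
          rintro b ⟨⟨y, hy⟩, -, h⟩
          exact hy h
        rintro (a | a) (b | b) hne'
        · exact (Set.disjoint_image_iff Subtype.val_injective).mpr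
            (hdisj (fun h => hne' (congrArg Sum.inl h)))
        · simpa [Set.disjoint_singleton_right] using hx_not a
        · simpa [Set.disjoint_singleton_left] using hx_not b
        · exact absurd (congrArg Sum.inr (Subsingleton.elim a b)) hne'
      · rintro (b | u)
        · exact (induceInduceIso G _ (V b)).connected_iff.mp (hconn' b)
        · exact singleton_induce_connected G x
      · rintro (a | a) (b | b) hab <;>
          simp only [addIsolatedVertex] at hab <;> try exact hab.elim
        obtain ⟨u, hu, v, hv, huv⟩ := hadj a b hab
        exact ⟨u.val, ⟨u, hu, rfl⟩, v.val, ⟨v, hv, rfl⟩, huv⟩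
    · exact Or.inl h'
  · rintro h ⟨V, hne, hdisj, hconn', hadj⟩
    have hH' : HasMinor G H' := by
      refine ⟨fun b => V (Sum.inl b), fun b => hne _, ?_, fun b => hconn' _, ?_⟩
      · intro a b hab
        exact hdisj (fun h => hab (Sum.inl_injective h))
      · intro a b hab
        exact hadj (Sum.inl a) (Sum.inl b) hab
    rcases h with h | ⟨_, hmin⟩
    · exact h hH'
    · obtain ⟨x, hxmem⟩ := hne (Sum.inr ())
      apply hmin x
      have hsub : ∀ b, V (Sum.inl b) ⊆ {y | y ≠ x} := by
        intro b v hv hvx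
        exact (hdisj (by simp : (Sum.inl b : β ⊕ Unit) ≠ Sum.inr ())).le_bot
          ⟨hv, hvx ▸ hxmem⟩
      refine ⟨fun b => {z : {y | y ≠ x} | z.val ∈ V (Sum.inl b)}, ?_, ?_, ?_, ?_⟩
      · intro b
        obtain ⟨v, hv⟩ := hne (Sum.inl b)
        exact ⟨⟨v, hsub b hv⟩, hv⟩
      · intro a b hab
        rw [Set.disjoint_left]
        intro z hz1 hz2
        exact (hdisj (fun h => hab (Sum.inl_injective h))).le_bot ⟨hz1, hz2⟩
      · intro b
        have himg : Subtype.val '' {z : {y | y ≠ x} | z.val ∈ V (Sum.inl b)}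
            = V (Sum.inl b) := by
          rw [show {z : {y | y ≠ x} | z.val ∈ V (Sum.inl b)}
              = Subtype.val ⁻¹' V (Sum.inl b) from rfl,
            Set.image_preimage_eq_inter_range, Subtype.range_coe]
          exact Set.inter_eq_left.mpr (hsub b)
        have hc : (G.induce (Subtype.val ''
            {z : {y | y ≠ x} | z.val ∈ V (Sum.inl b)})).Connected := by
          rw [himg]; exact hconn' (Sum.inl b)
        exact (induceInduceIso G _ _).connected_iff.mpr hc
      · intro a b hab
        obtain ⟨u, hu, v, hv, huv⟩ := hadj (Sum.inl a) (Sum.inl b) hab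
        exact ⟨⟨u, hsub a hu⟩, hu, ⟨v, hsub b hv⟩, hv, huv⟩
end
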